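/- Let π₁ : P¹(K) → P¹(L) be a specialisation. If π₁ is not injective (there exist distinct x, y ∈ K with π₁([x:1]) = π₁([y:1]) ∈ P¹(L) \ {[1:0]}), then the ring O_K = {x : π₁([x:1]) ≠ [1:0]} is a proper subring of K. -/

import Mathlib

/-- The projective line over `K`. -/
abbrev P1 (K : Type*) [Field K] := Projectivization K (Fin 2 → K)

/-- A point of `P¹(K)` lies in `P¹(L)` if it has a homogeneous coordinate vector with
entries in `L`. -/
def InL {K : Type*} [Field K] (L : Subfield K) (p : P1 K) : Prop :=
  ∃ (x : Fin 2 → K) (hx : x ≠ 0), (∀ i, x i ∈ L) ∧ p = Projectivization.mk K x hx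

/-- A family of multi-homogeneous polynomials (one block of two variables for each of the `m`
factors of `(P¹)^m`) with coefficients in `L`: a closed subvariety of `(P¹)^m` defined
over `L`. -/
def DefinedOver {K : Type*} [Field K] (L : Subfield K) {m : ℕ}
    (S : Set (MvPolynomial (Fin m × Fin 2) K)) : Prop :=
  ∀ p ∈ S, (∀ mon, MvPolynomial.coeff mon p ∈ L) ∧
    ∃ d : Fin m → ℕ,
      MvPolynomial.IsWeightedHomogeneous (fun q : Fin m × Fin 2 => Pi.single q.1 1) p d

/-- A tuple `a ∈ (P¹(K))^m` lies on the closed subvariety cut out by `S`. -/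
def Vanishes {K : Type*} [Field K] {m : ℕ}
    (S : Set (MvPolynomial (Fin m × Fin 2) K)) (a : Fin m → P1 K) : Prop :=
  ∃ x : Fin m → Fin 2 → K,
    (∀ k, ∃ h : x k ≠ 0, Projectivization.mk K (x k) h = a k) ∧
    ∀ p ∈ S, MvPolynomial.eval (fun q : Fin m × Fin 2 => x q.1 q.2) p = 0

/-- A specialisation `π₁ : P¹(K) → P¹(L)`: it lands in `P¹(L)`, fixes `P¹(L)` pointwise, and
preserves every closed algebraic subvariety of every Cartesian power of `P¹` defined
over `L`. -/
def IsSpecialisation {K : Type*} [Field K] (L : Subfield K) (π : P1 K → P1 K) : Prop :=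
  (∀ p, InL L (π p)) ∧ (∀ p, InL L p → π p = p) ∧
    ∀ (m : ℕ) (S : Set (MvPolynomial (Fin m × Fin 2) K)), DefinedOver L S →
      ∀ a : Fin m → P1 K, Vanishes S a → Vanishes S (π ∘ a)

/-- The point `[x : 1]` of `P¹(K)`. -/
def pt {K : Type*} [Field K] (x : K) : P1 K :=
  Projectivization.mk K ![x, 1] (by intro h; simpa using congrFun h 1)

/-- The point at infinity `[1 : 0]` of `P¹(K)`. -/
def inftyPt (K : Type*) [Field K] : P1 K :=
  Projectivization.mk K ![1, 0] (by intro h; simpa using congrFun h 0)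


section SpecHelpers

open MvPolynomial

variable {K : Type*} [Field K]

private lemma spec_pair_ne_zero (a : K) : (![a, 1] : Fin 2 → K) ≠ 0 := fun h =>
  one_ne_zero (α := K) (by simpa [Matrix.vecHead, Matrix.vecTail] using congrFun h 1)

private lemma spec_vec_eq_pair (v : Fin 2 → K) : v = ![v 0, v 1] := by
  funext i; fin_cases i <;> rfl

private lemma spec_cross {u w : Fin 2 → K} {hu : u ≠ 0} {hw : w ≠ 0}
    (h : Projectivization.mk K u hu = Projectivization.mk K w hw) :
    u 0 * w 1 = w 0 * u 1 := by
  rw [Projectivization.mk_eq_mk_iff] at h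
  obtain ⟨a, ha⟩ := h
  have h0 := congrFun ha 0
  have h1 := congrFun ha 1
  simp only [Pi.smul_apply, Units.smul_def, smul_eq_mul] at h0 h1
  rw [← h0, ← h1]; ring

private lemma spec_mk_eq_infty_iff {v : Fin 2 → K} (hv : v ≠ 0) :
    Projectivization.mk K v hv = inftyPt K ↔ v 1 = 0 := by
  constructor
  · intro h
    rw [inftyPt] at h
    have := spec_cross h
    simpa using this.symm
  · intro h1
    have h0 : v 0 ≠ 0 := by
      intro h0
      apply hv
      rw [spec_vec_eq_pair v, h0, h1]
      funext i; fin_cases i <;> rfl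
    rw [inftyPt, Projectivization.mk_eq_mk_iff]
    refine ⟨Units.mk0 (v 0) h0, ?_⟩
    funext i; fin_cases i <;> simp [Units.smul_def, h1]

private lemma spec_mk_eq_pt_zero_iff {v : Fin 2 → K} (hv : v ≠ 0) :
    Projectivization.mk K v hv = pt 0 ↔ v 0 = 0 := by
  constructor
  · intro h
    rw [pt] at h
    have := spec_cross h
    simpa using this
  · intro h0
    have h1 : v 1 ≠ 0 := by
      intro h1
      apply hv
      rw [spec_vec_eq_pair v, h0, h1]
      funext i; fin_cases i <;> rfl
    rw [pt, Projectivization.mk_eq_mk_iff]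
    refine ⟨Units.mk0 (v 1) h1, ?_⟩
    funext i; fin_cases i <;> simp [Units.smul_def, h0]

private lemma spec_mono3 {σ : Type*} (a b c : σ) (r : K) :
    (monomial (Finsupp.single a 1 + Finsupp.single b 1 + Finsupp.single c 1) r
      : MvPolynomial σ K) = C r * X a * X b * X c := by
  simp [X, monomial_mul, C_mul_monomial]

private lemma spec_mono2 {σ : Type*} (a b : σ) (r : K) :
    (monomial (Finsupp.single a 1 + Finsupp.single b 1) r : MvPolynomial σ K)
      = C r * X a * X b := by
  simp [X, monomial_mul, C_mul_monomial]

private lemma spec_weight_single {m : ℕ} (q : Fin m × Fin 2) :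
    Finsupp.weight (fun q : Fin m × Fin 2 => Pi.single q.1 (1 : ℕ)) (Finsupp.single q 1)
      = (Pi.single q.1 1 : Fin m → ℕ) := by
  rw [Finsupp.weight_apply]
  rw [Finsupp.sum_single_index (by simp)]
  exact one_smul _ _

private lemma spec_step1 (L : Subfield K) (π : P1 K → P1 K)
    (hπ : IsSpecialisation L π) {x y : K}
    (hxy : π (pt x) = π (pt y)) (hinf : π (pt x) ≠ inftyPt K) :
    π (pt (x - y)) = pt 0 := by
  classical
  set p₁ : MvPolynomial (Fin 3 × Fin 2) K :=
    monomial (Finsupp.single ((0 : Fin 3), (0 : Fin 2)) 1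
      + Finsupp.single ((1 : Fin 3), (1 : Fin 2)) 1
      + Finsupp.single ((2 : Fin 3), (1 : Fin 2)) 1) 1
    + monomial (Finsupp.single ((1 : Fin 3), (0 : Fin 2)) 1
      + Finsupp.single ((0 : Fin 3), (1 : Fin 2)) 1
      + Finsupp.single ((2 : Fin 3), (1 : Fin 2)) 1) (-1)
    + monomial (Finsupp.single ((2 : Fin 3), (0 : Fin 2)) 1
      + Finsupp.single ((0 : Fin 3), (1 : Fin 2)) 1
      + Finsupp.single ((1 : Fin 3), (1 : Fin 2)) 1) (-1) with hp₁
  have hdef : DefinedOver L {p₁} := by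
    intro p hp
    rw [Set.mem_singleton_iff] at hp
    subst hp
    constructor
    · intro mon
      rw [hp₁]
      simp only [MvPolynomial.coeff_add, MvPolynomial.coeff_monomial]
      refine L.add_mem (L.add_mem ?_ ?_) ?_ <;> split_ifs <;>
        first
          | exact L.one_mem
          | exact L.zero_mem
          | exact L.neg_mem L.one_mem
    · refine ⟨fun _ => 1, ?_⟩
      rw [hp₁]
      refine MvPolynomial.IsWeightedHomogeneous.add
        (MvPolynomial.IsWeightedHomogeneous.add ?_ ?_) ?_ <;>
      · apply MvPolynomial.isWeightedHomogeneous_monomial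
        rw [map_add, map_add, spec_weight_single, spec_weight_single, spec_weight_single]
        funext i
        fin_cases i <;> simp [Pi.single_apply]
  have hvan : Vanishes {p₁} ![pt x, pt y, pt (x - y)] := by
    refine ⟨![![x, 1], ![y, 1], ![x - y, 1]], ?_, ?_⟩
    · intro k
      fin_cases k
      · exact ⟨spec_pair_ne_zero x, rfl⟩
      · exact ⟨spec_pair_ne_zero y, rfl⟩
      · exact ⟨spec_pair_ne_zero (x - y), rfl⟩
    · intro p hp
      rw [Set.mem_singleton_iff] at hp
      subst hp
      rw [hp₁, spec_mono3, spec_mono3, spec_mono3]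
      simp only [map_add, MvPolynomial.eval_mul, MvPolynomial.eval_C, MvPolynomial.eval_X]
      simp [Matrix.vecHead, Matrix.vecTail]
      ring
  obtain ⟨u, hu, heval⟩ := hπ.2.2 3 {p₁} hdef _ hvan
  obtain ⟨h0, hmk0⟩ := hu 0
  obtain ⟨h1, hmk1⟩ := hu 1
  obtain ⟨h2, hmk2⟩ := hu 2
  simp only [Function.comp_apply, Matrix.cons_val_zero, Matrix.cons_val_one,
    Matrix.head_cons, Matrix.cons_val_two, Matrix.tail_cons] at hmk0 hmk1 hmk2
  have hne0 : u 0 1 ≠ 0 := by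
    intro h
    exact hinf (hmk0 ▸ (spec_mk_eq_infty_iff h0).2 h)
  have hne1 : u 1 1 ≠ 0 := by
    intro h
    exact hinf (hxy ▸ (hmk1 ▸ (spec_mk_eq_infty_iff h1).2 h))
  have hcr : u 0 0 * u 1 1 = u 1 0 * u 0 1 := by
    apply spec_cross (hw := h1)
    rw [hmk0, hmk1, hxy]
  have he := heval p₁ rfl
  rw [hp₁, spec_mono3, spec_mono3, spec_mono3] at he
  simp only [map_add, MvPolynomial.eval_mul, MvPolynomial.eval_C, MvPolynomial.eval_X] at he
  have hz : u 2 0 * (u 0 1 * u 1 1) = 0 := by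
    linear_combination -he + u 2 1 * hcr
  rcases mul_eq_zero.1 hz with hz0 | hz1
  · rw [← hmk2]
    exact (spec_mk_eq_pt_zero_iff h2).2 hz0
  · rcases mul_eq_zero.1 hz1 with h | h
    · exact absurd h hne0
    · exact absurd h hne1

private lemma spec_step2 (L : Subfield K) (π : P1 K → P1 K)
    (hπ : IsSpecialisation L π) {m : K} (hm : m ≠ 0)
    (h0 : π (pt m) = pt 0) : π (pt m⁻¹) = inftyPt K := by
  classical
  set p₂ : MvPolynomial (Fin 2 × Fin 2) K :=
    monomial (Finsupp.single ((0 : Fin 2), (0 : Fin 2)) 1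
      + Finsupp.single ((1 : Fin 2), (0 : Fin 2)) 1) 1
    + monomial (Finsupp.single ((0 : Fin 2), (1 : Fin 2)) 1
      + Finsupp.single ((1 : Fin 2), (1 : Fin 2)) 1) (-1) with hp₂
  have hdef : DefinedOver L {p₂} := by
    intro p hp
    rw [Set.mem_singleton_iff] at hp
    subst hp
    constructor
    · intro mon
      rw [hp₂]
      simp only [MvPolynomial.coeff_add, MvPolynomial.coeff_monomial]
      refine L.add_mem ?_ ?_ <;> split_ifs <;>
        first
          | exact L.one_mem
          | exact L.zero_mem
          | exact L.neg_mem L.one_mem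
    · refine ⟨fun _ => 1, ?_⟩
      rw [hp₂]
      refine MvPolynomial.IsWeightedHomogeneous.add ?_ ?_ <;>
      · apply MvPolynomial.isWeightedHomogeneous_monomial
        rw [map_add, spec_weight_single, spec_weight_single]
        funext i
        fin_cases i <;> simp [Pi.single_apply]
  have hvan : Vanishes {p₂} ![pt m, pt m⁻¹] := by
    refine ⟨![![m, 1], ![m⁻¹, 1]], ?_, ?_⟩
    · intro k
      fin_cases k
      · exact ⟨spec_pair_ne_zero m, rfl⟩
      · exact ⟨spec_pair_ne_zero m⁻¹, rfl⟩
    · intro p hp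
      rw [Set.mem_singleton_iff] at hp
      subst hp
      rw [hp₂, spec_mono2, spec_mono2]
      simp only [map_add, MvPolynomial.eval_mul, MvPolynomial.eval_C, MvPolynomial.eval_X]
      simp [Matrix.vecHead, Matrix.vecTail]
      field_simp
      norm_num
  obtain ⟨u, hu, heval⟩ := hπ.2.2 2 {p₂} hdef _ hvan
  obtain ⟨hu0, hmk0⟩ := hu 0
  obtain ⟨hu1, hmk1⟩ := hu 1
  simp only [Function.comp_apply, Matrix.cons_val_zero, Matrix.cons_val_one,
    Matrix.head_cons] at hmk0 hmk1
  have hz0 : u 0 0 = 0 := by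
    rw [← spec_mk_eq_pt_zero_iff hu0, hmk0, h0]
  have hz1 : u 0 1 ≠ 0 := by
    intro h
    apply hu0
    rw [spec_vec_eq_pair (u 0), hz0, h]
    funext i; fin_cases i <;> rfl
  have he := heval p₂ rfl
  rw [hp₂, spec_mono2, spec_mono2] at he
  simp only [map_add, MvPolynomial.eval_mul, MvPolynomial.eval_C, MvPolynomial.eval_X] at he
  have : u 0 1 * u 1 1 = 0 := by
    linear_combination -he + u 1 0 * hz0
  rcases mul_eq_zero.1 this with h | h
  · exact absurd h hz1
  · rw [← hmk1]
    exact (spec_mk_eq_infty_iff hu1).2 h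

end SpecHelpers

/-- If a specialisation `π₁ : P¹(K) → P¹(L)` is not injective on affine points (there are
distinct `x, y` with `π₁([x:1]) = π₁([y:1]) ≠ [1:0]`), then
`O_K = {x : π₁([x:1]) ≠ [1:0]}` is a proper subset of `K`. -/
theorem specialisation_proper {K : Type*} [Field K] (L : Subfield K)
    (π : P1 K → P1 K) (hπ : IsSpecialisation L π)
    (hnt : ∃ x y : K, x ≠ y ∧ π (pt x) = π (pt y) ∧ π (pt x) ≠ inftyPt K) :
    {x : K | π (pt x) ≠ inftyPt K} ≠ Set.univ := by
  obtain ⟨x, y, hxy, heq, hinf⟩ := hnt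
  have hm : x - y ≠ 0 := sub_ne_zero.2 hxy
  have h1 := spec_step1 L π hπ heq hinf
  have h2 := spec_step2 L π hπ hm h1
  intro hset
  have hmem : (x - y)⁻¹ ∈ {x : K | π (pt x) ≠ inftyPt K} := hset ▸ Set.mem_univ _
  exact hmem h2
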